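/- Let q ∈ ℂ with q ≠ 0, q ≠ 1, q² ≠ 1 and q³ ≠ 1, let α ∈ ℂ be nonzero, and consider the representation S4a of SL_q(2,ℂ) by 4×4 complex matrices: A₁₁ = diag(q³,q²,q,1), A₁₂ = e₁₂ + e₂₃ + e₃₄, A₂₁ = α·A₁₂, A₂₂ = A₁₁⁻¹ + αq⁻²e₁₃ + αq⁻¹e₂₄. Then the only matrices v ∈ M₄(ℂ) commuting with all four matrices A₁₁, A₁₂, A₂₁, A₂₂ are the scalar multiples of the identity matrix; that is, the corresponding inner action has only trivial invariants. -/

import Mathlib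

/-- The 4×4 matrix unit `e_{ij}` (indices `0,…,3`). -/
def e (i j : Fin 4) : Matrix (Fin 4) (Fin 4) ℂ := Matrix.single i j 1

/-- for the representation `S4a` of `SL_q(2,ℂ)`
(`A₁₁ = diag(q³,q²,q,1)`, `A₁₂ = e₁₂ + e₂₃ + e₃₄`, `A₂₁ = α A₁₂`,
`A₂₂ = A₁₁⁻¹ + α q⁻² e₁₃ + α q⁻¹ e₂₄`, with `q ≠ 0`, `q ≠ 1`, `q² ≠ 1`,
`q³ ≠ 1`, `α ≠ 0`), the only matrices commuting with all four components are
the scalar multiples of the identity. -/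
theorem invariants_of_S4a_trivial (q α : ℂ) (hq0 : q ≠ 0) (hq1 : q ≠ 1)
    (hq2 : q ^ 2 ≠ 1) (hq3 : q ^ 3 ≠ 1) (hα : α ≠ 0)
    (v : Matrix (Fin 4) (Fin 4) ℂ)
    (h₁ : v * Matrix.diagonal ![q ^ 3, q ^ 2, q, 1] =
      Matrix.diagonal ![q ^ 3, q ^ 2, q, 1] * v)
    (h₂ : v * (e 0 1 + e 1 2 + e 2 3) = (e 0 1 + e 1 2 + e 2 3) * v)
    (h₃ : v * (α • (e 0 1 + e 1 2 + e 2 3)) = (α • (e 0 1 + e 1 2 + e 2 3)) * v)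
    (h₄ : v * ((Matrix.diagonal ![q ^ 3, q ^ 2, q, 1])⁻¹ +
        (α * q⁻¹ ^ 2) • e 0 2 + (α * q⁻¹) • e 1 3) =
      ((Matrix.diagonal ![q ^ 3, q ^ 2, q, 1])⁻¹ +
        (α * q⁻¹ ^ 2) • e 0 2 + (α * q⁻¹) • e 1 3) * v) :
    ∃ c : ℂ, v = c • (1 : Matrix (Fin 4) (Fin 4) ℂ) := by
  have hq1' : q - 1 ≠ 0 := sub_ne_zero.mpr hq1
  have hq2' : q ^ 2 - 1 ≠ 0 := sub_ne_zero.mpr hq2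
  have hq3' : q ^ 3 - 1 ≠ 0 := sub_ne_zero.mpr hq3
  rw [← Matrix.ext_iff] at h₁ h₂
  simp only [e, Matrix.mul_apply, Fin.sum_univ_four, Matrix.diagonal_apply,
    Matrix.single, Matrix.add_apply, Matrix.of_apply,
    Matrix.cons_val', Matrix.cons_val_zero, Matrix.cons_val_one, Matrix.head_cons,
    Matrix.cons_val_fin_one, Matrix.empty_val', Matrix.cons_val_succ] at h₁ h₂
  have z : ∀ (i j : Fin 4) (d : ℂ), d ≠ 0 → d * v i j = 0 → v i j = 0 := by
    intro i j d hd h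
    exact (mul_eq_zero.mp h).resolve_left hd
  have e01 := h₁ 0 1; have e02 := h₁ 0 2; have e03 := h₁ 0 3
  have e10 := h₁ 1 0; have e12 := h₁ 1 2; have e13 := h₁ 1 3
  have e20 := h₁ 2 0; have e21 := h₁ 2 1; have e23 := h₁ 2 3
  have e30 := h₁ 3 0; have e31 := h₁ 3 1; have e32 := h₁ 3 2
  simp at e01 e02 e03 e10 e12 e13 e20 e21 e23 e30 e31 e32
  have z01 : v 0 1 = 0 := z 0 1 _ (mul_ne_zero (pow_ne_zero 2 hq0) hq1')
    (by linear_combination -e01)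
  have z02 : v 0 2 = 0 := z 0 2 _ (mul_ne_zero hq0 hq2')
    (by linear_combination -e02)
  have z03 : v 0 3 = 0 := z 0 3 _ hq3' (by linear_combination -e03)
  have z10 : v 1 0 = 0 := z 1 0 _ (mul_ne_zero (pow_ne_zero 2 hq0) hq1')
    (by linear_combination e10)
  have z12 : v 1 2 = 0 := z 1 2 _ (mul_ne_zero hq0 hq1')
    (by linear_combination -e12)
  have z13 : v 1 3 = 0 := z 1 3 _ hq2' (by linear_combination -e13)
  have z20 : v 2 0 = 0 := z 2 0 _ (mul_ne_zero hq0 hq2')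
    (by linear_combination e20)
  have z21 : v 2 1 = 0 := z 2 1 _ (mul_ne_zero hq0 hq1')
    (by linear_combination e21)
  have z23 : v 2 3 = 0 := z 2 3 _ hq1' (by linear_combination -e23)
  have z30 : v 3 0 = 0 := z 3 0 _ hq3' (by linear_combination e30)
  have z31 : v 3 1 = 0 := z 3 1 _ hq2' (by linear_combination e31)
  have z32 : v 3 2 = 0 := z 3 2 _ hq1' (by linear_combination e32)
  have d01 := h₂ 0 1; have d12 := h₂ 1 2; have d23 := h₂ 2 3
  simp at d01 d12 d23
  clear h₁ h₂ h₃ h₄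
  refine ⟨v 0 0, ?_⟩
  ext i j
  fin_cases i <;> fin_cases j <;>
    simp [Matrix.one_apply, z01, z02, z03, z10, z12, z13, z20, z21, z23,
      z30, z31, z32, d01, d12, d23]
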